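/- Let G, H be finite groups with orders invertible in the field k, X an (H,G)-biset, α ∈ X, with G₀, G₁ ≤ G and H₀, H₁ ≤ H the stabilizer subgroups as in the biset lemma, and identify G₁/G₀ with H₁/H₀ via the canonical isomorphism. Suppose R is a functor assigning a kG-module M = R(x), a kH-module N = R(y), and to each element h·α·g of the biset the linear map R(h)∘φ∘R(g) for a fixed linear map φ = R(α) : M → N, compatibly with composition. If U is a simple kG₁-submodule direct summand of M↓_{G₁} with φ(U) ≠ 0, then: (1) U is a direct summand of k↑_{G₀}^{G₁}; (2) the restriction φ|_U : U → φ(U) is an isomorphism of k(G₁/G₀)-modules under the identification; and (3) φ(U) is a simple direct summand of k↑_{H₀}^{H₁}. -/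

import Mathlib

open MulOpposite

section BisetStabilizers

variable {G H X : Type*} [Group G] [Group H] [MulAction H X] [MulAction Gᵐᵒᵖ X]

/-- `G₀ = Stab_G(α) = {g : α·g = α}` as a subgroup of `G`. -/
def bisetG0 (α : X) : Subgroup G where
  carrier := {g : G | op g • α = α}
  one_mem' := by simp
  mul_mem' := by
    intro a b ha hb
    simp only [Set.mem_setOf_eq] at *
    rw [show op (a * b) = op b * op a from rfl, mul_smul, ha, hb]
  inv_mem' := by
    intro a ha
    simp only [Set.mem_setOf_eq] at *
    have h1 : op a⁻¹ • (op a • α) = α := by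
      rw [← mul_smul, ← op_mul, mul_inv_cancel, op_one, one_smul]
    rw [ha] at h1
    exact h1

/-- `H₀ = Stab_H(α) = {h : h·α = α}` as a subgroup of `H`. -/
def bisetH0 (α : X) : Subgroup H := MulAction.stabilizer H α

/-- `G₁ = {g : ∃ h, α·g = h·α}` as a subgroup of `G`. -/
def bisetG1 (hcomm : ∀ (h : H) (g : Gᵐᵒᵖ) (x : X), g • (h • x) = h • (g • x))
    (α : X) : Subgroup G where
  carrier := {g : G | ∃ h : H, op g • α = h • α}
  one_mem' := ⟨1, by simp⟩
  mul_mem' := by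
    rintro a b ⟨ha, hha⟩ ⟨hb, hhb⟩
    refine ⟨ha * hb, ?_⟩
    rw [show op (a * b) = op b * op a from rfl, mul_smul, hha, hcomm, hhb, mul_smul]
  inv_mem' := by
    rintro a ⟨h, hh⟩
    refine ⟨h⁻¹, ?_⟩
    have h1 : op a⁻¹ • (op a • α) = α := by
      rw [← mul_smul, ← op_mul, mul_inv_cancel, op_one, one_smul]
    have h2 : h • (op a⁻¹ • α) = α := by rw [← hcomm, ← hh]; exact h1
    calc op a⁻¹ • α = h⁻¹ • (h • (op a⁻¹ • α)) := by
          rw [← mul_smul, inv_mul_cancel, one_smul]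
      _ = h⁻¹ • α := by rw [h2]

/-- `H₁ = {h : ∃ g, h·α = α·g}` as a subgroup of `H`. -/
def bisetH1 (hcomm : ∀ (h : H) (g : Gᵐᵒᵖ) (x : X), g • (h • x) = h • (g • x))
    (α : X) : Subgroup H where
  carrier := {h : H | ∃ g : G, h • α = op g • α}
  one_mem' := ⟨1, by simp⟩
  mul_mem' := by
    rintro a b ⟨ga, hga⟩ ⟨gb, hgb⟩
    refine ⟨ga * gb, ?_⟩
    rw [mul_smul, hgb, ← hcomm, hga, ← mul_smul, ← op_mul]
  inv_mem' := by
    rintro a ⟨g, hg⟩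
    refine ⟨g⁻¹, ?_⟩
    have h1 : a⁻¹ • (a • α) = α := by rw [← mul_smul, inv_mul_cancel, one_smul]
    have h2 : op g • (a⁻¹ • α) = α := by rw [hcomm, ← hg]; exact h1
    calc a⁻¹ • α = op g⁻¹ • (op g • (a⁻¹ • α)) := by
          rw [← mul_smul, ← op_mul, mul_inv_cancel, op_one, one_smul]
      _ = op g⁻¹ • α := by rw [h2]

end BisetStabilizers



open Representation in
theorem auxPerm {k Γ M : Type*} [Field k] [Group Γ] [Finite Γ] [AddCommGroup M] [Module k M]
    (ρ : Representation k Γ M) (Γ₀ : Subgroup Γ)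
    (U : Submodule k M)
    (hinv : ∀ g : Γ, U.map (ρ g) ≤ U)
    (htriv : ∀ g ∈ Γ₀, ∀ u ∈ U, ρ g u = u)
    (hUsimple : ∀ W ≤ U, (∀ g : Γ, W.map (ρ g) ≤ W) → W = ⊥ ∨ W = U)
    (hUne : U ≠ ⊥) :
    ∃ ι : M →ₗ[k] ((Γ ⧸ Γ₀) →₀ k),
      (∀ g : Γ, ∀ u ∈ U, ι (ρ g u) = MonoidAlgebra.coeffLinearEquiv k
        (Representation.ofMulAction k Γ (Γ ⧸ Γ₀) g ((MonoidAlgebra.coeffLinearEquiv k).symm (ι u)))) ∧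
      (∀ u ∈ U, ι u = 0 → u = 0) := by
  have hinv' : ∀ (g : Γ) (u : M), u ∈ U → ρ g u ∈ U := fun g u hu => hinv g ⟨u, hu, rfl⟩
  obtain ⟨u₀, hu₀U, hu₀⟩ := Submodule.exists_mem_ne_zero_of_ne_bot hUne
  -- a functional λl with λl u₀ = 1
  have hker : LinearMap.ker (LinearMap.toSpanSingleton k M u₀) = ⊥ := by
    rw [LinearMap.ker_eq_bot]
    intro a b hab
    have h2 : (a - b) • u₀ = 0 := by
      rw [sub_smul, sub_eq_zero]
      simpa [LinearMap.toSpanSingleton_apply] using hab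
    rcases smul_eq_zero.mp h2 with h | h
    · exact sub_eq_zero.mp h
    · exact absurd h hu₀
  obtain ⟨lam, hlam⟩ :=
    LinearMap.exists_leftInverse_of_injective (LinearMap.toSpanSingleton k M u₀) hker
  have hlam₀ : lam u₀ = 1 := by
    have := congrArg (fun f => f (1 : k)) (congrArg DFunLike.coe hlam)
    simpa [LinearMap.toSpanSingleton_apply] using this
  -- the map ι
  set ι : M →ₗ[k] ((Γ ⧸ Γ₀) →₀ k) :=
    (Finsupp.linearEquivFunOnFinite k k (Γ ⧸ Γ₀)).symm.toLinearMap ∘ₗ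
      LinearMap.pi (fun q => lam ∘ₗ ρ (Quotient.out q)⁻¹) with hι
  have hιapp : ∀ (m : M) (q : Γ ⧸ Γ₀), ι m q = lam (ρ (Quotient.out q)⁻¹ m) := by
    intro m q
    simp [hι, Finsupp.linearEquivFunOnFinite, LinearMap.pi_apply]
  -- well-definedness on cosets
  have hcoset : ∀ (a b : Γ), (a : Γ ⧸ Γ₀) = b → ∀ u ∈ U, lam (ρ a⁻¹ u) = lam (ρ b⁻¹ u) := by
    intro a b hab u hu
    have hmem : b⁻¹ * a ∈ Γ₀ := by
      have := Γ₀.inv_mem ((QuotientGroup.eq).mp hab)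
      rwa [mul_inv_rev, inv_inv] at this
    have : ρ (b⁻¹ * a) (ρ a⁻¹ u) = ρ a⁻¹ u := htriv _ hmem _ (hinv' _ _ hu)
    have h2 : ρ b⁻¹ u = ρ a⁻¹ u := by
      calc ρ b⁻¹ u = ρ (b⁻¹ * a) (ρ a⁻¹ u) := by
            rw [← Module.End.mul_apply, ← map_mul]
            simp
        _ = ρ a⁻¹ u := this
    rw [h2]
  refine ⟨ι, ?_, ?_⟩
  · intro g u hu
    ext q
    rw [hιapp, MonoidAlgebra.coeffLinearEquiv_apply, Representation.coeff_ofMulAction,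
      MonoidAlgebra.coeffLinearEquiv_symm_apply, MonoidAlgebra.coeff_ofCoeff, hιapp]
    have h1 : lam (ρ (Quotient.out q)⁻¹ (ρ g u)) = lam (ρ (g⁻¹ * Quotient.out q)⁻¹ u) := by
      rw [mul_inv_rev, inv_inv, map_mul]
      rfl
    rw [h1]
    refine hcoset _ _ ?_ u hu
    have hl : ((g⁻¹ * Quotient.out q : Γ) : Γ ⧸ Γ₀) = g⁻¹ • q :=
      MulAction.Quotient.mk_smul_out Γ₀ g⁻¹ q
    have hr : ((Quotient.out (g⁻¹ • q) : Γ) : Γ ⧸ Γ₀) = g⁻¹ • q := Quotient.out_eq' _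
    rw [hl, hr]
  · intro u hu hiu
    -- kernel submodule
    set W : Submodule k M :=
      { carrier := {m | m ∈ U ∧ ∀ g : Γ, lam (ρ g m) = 0}
        add_mem' := by
          rintro a b ⟨haU, ha⟩ ⟨hbU, hb⟩
          exact ⟨U.add_mem haU hbU, fun g => by simp [ha g, hb g]⟩
        zero_mem' := ⟨U.zero_mem, fun g => by simp⟩
        smul_mem' := by
          rintro c a ⟨haU, ha⟩
          exact ⟨U.smul_mem c haU, fun g => by simp [ha g]⟩ } with hW
    have hWU : W ≤ U := fun m hm => hm.1
    have hWinv : ∀ g : Γ, W.map (ρ g) ≤ W := by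
      rintro g m ⟨a, ⟨haU, ha⟩, rfl⟩
      refine ⟨hinv' g a haU, fun g' => ?_⟩
      rw [← Module.End.mul_apply, ← map_mul]
      exact ha (g' * g)
    have hune : u ∈ W := by
      refine ⟨hu, fun g => ?_⟩
      have := DFunLike.congr_fun hiu ((g⁻¹ : Γ) : Γ ⧸ Γ₀)
      rw [hιapp] at this
      simp only [Finsupp.coe_zero, Pi.zero_apply] at this
      have h2 := hcoset (Quotient.out ((g⁻¹ : Γ) : Γ ⧸ Γ₀)) g⁻¹ (Quotient.out_eq' _) u hu
      rw [inv_inv] at h2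
      rw [← h2, this]
    rcases hUsimple W hWU hWinv with h | h
    · rw [h] at hune; exact hune
    · exfalso
      have : u₀ ∈ W := h.symm ▸ hu₀U
      have h1 := this.2 1
      rw [map_one] at h1
      simp [hlam₀] at h1


/-- Lemma 3.5 of the paper.  Let `X` be an `(H,G)`-biset with chosen `α`, with stabilizer
subgroups `G₀ ⊴ G₁ ≤ G` and `H₀ ⊴ H₁ ≤ H`, and let `R` be a representation of the
two-object category `D_α`, given by a `G`-representation `M`, an `H`-representation `N`,
and a linear map `φ : M → N` satisfying `φ ∘ ρ(g) = σ(h) ∘ φ` whenever `α·g = h·α`.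
If `U` is a simple `G₁`-invariant direct summand of `M↓_{G₁}` with `φ(U) ≠ 0`, then:
(1) `U` is a direct summand of the permutation module `k[G₁/G₀]`;
(2) `φ` restricted to `U` is injective, hence an isomorphism onto `φ(U)` compatible with
the identification `G₁/G₀ ≅ H₁/H₀`; and
(3) `φ(U)` is an `H₁`-invariant simple submodule of `N` which is a direct summand of the
permutation module `k[H₁/H₀]`. -/
theorem stmt15 {k G H X M N : Type*} [Field k] [Group G] [Group H] [Fintype G] [Fintype H]
    (hGord : (Fintype.card G : k) ≠ 0) (hHord : (Fintype.card H : k) ≠ 0)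
    [MulAction H X] [MulAction Gᵐᵒᵖ X]
    (hcomm : ∀ (h : H) (g : Gᵐᵒᵖ) (x : X), g • (h • x) = h • (g • x))
    (α : X)
    [AddCommGroup M] [Module k M] [AddCommGroup N] [Module k N]
    [FiniteDimensional k M] [FiniteDimensional k N]
    (ρ : Representation k G M) (σ : Representation k H N) (φ : M →ₗ[k] N)
    (hcompat : ∀ (g : G) (h : H), op g • α = h • α → φ ∘ₗ ρ g = σ h ∘ₗ φ)
    (U : Submodule k M)
    (hUinv : ∀ g : bisetG1 hcomm α, U.map (ρ (g : G)) ≤ U)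
    (hUne : U ≠ ⊥)
    (hUsimple : ∀ W ≤ U, (∀ g : bisetG1 hcomm α, W.map (ρ (g : G)) ≤ W) → W = ⊥ ∨ W = U)
    (hUsummand : ∃ U' : Submodule k M,
      (∀ g : bisetG1 hcomm α, U'.map (ρ (g : G)) ≤ U') ∧ IsCompl U U')
    (hφU : U.map φ ≠ ⊥) :
    -- (1) U is a direct summand of k[G₁/G₀] as a representation of G₁
    (∃ (ι : U →ₗ[k] ((bisetG1 hcomm α ⧸ (bisetG0 α).subgroupOf (bisetG1 hcomm α)) →₀ k))
        (pr : ((bisetG1 hcomm α ⧸ (bisetG0 α).subgroupOf (bisetG1 hcomm α)) →₀ k) →ₗ[k] U),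
      (∀ (g : bisetG1 hcomm α) (u : U),
        ι ((ρ (g : G)).restrict (fun m hm => hUinv g ⟨m, hm, rfl⟩) u) =
          MonoidAlgebra.coeffLinearEquiv k (Representation.ofMulAction k (bisetG1 hcomm α)
            (bisetG1 hcomm α ⧸ (bisetG0 α).subgroupOf (bisetG1 hcomm α)) g
              ((MonoidAlgebra.coeffLinearEquiv k).symm (ι u)))) ∧
      pr ∘ₗ ι = LinearMap.id) ∧
    -- (2) φ restricted to U is injective (an isomorphism onto φ(U)), compatibly with the
    -- identification G₁/G₀ ≅ H₁/H₀
    ((∀ u ∈ U, φ u = 0 → u = 0) ∧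
      ∀ (g : G) (h : H), op g • α = h • α → ∀ u ∈ U, φ (ρ g u) = σ h (φ u)) ∧
    -- (3) φ(U) is an H₁-invariant simple submodule of N and a direct summand of k[H₁/H₀]
    (∃ hinv : ∀ h : bisetH1 hcomm α, ∀ v ∈ U.map φ, σ (h : H) v ∈ U.map φ,
      (∀ W ≤ U.map φ, (∀ h : bisetH1 hcomm α, W.map (σ (h : H)) ≤ W) → W = ⊥ ∨ W = U.map φ) ∧
      ∃ (ι' : U.map φ →ₗ[k] ((bisetH1 hcomm α ⧸ (bisetH0 α).subgroupOf (bisetH1 hcomm α)) →₀ k))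
        (pr' : ((bisetH1 hcomm α ⧸ (bisetH0 α).subgroupOf (bisetH1 hcomm α)) →₀ k) →ₗ[k] U.map φ),
        (∀ (h : bisetH1 hcomm α) (v : U.map φ),
          ι' ((σ (h : H)).restrict (fun n hn => hinv h n hn) v) =
            MonoidAlgebra.coeffLinearEquiv k (Representation.ofMulAction k (bisetH1 hcomm α)
              (bisetH1 hcomm α ⧸ (bisetH0 α).subgroupOf (bisetH1 hcomm α)) h
                ((MonoidAlgebra.coeffLinearEquiv k).symm (ι' v)))) ∧
        pr' ∘ₗ ι' = LinearMap.id) := by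
  classical
  set Γ := bisetG1 hcomm α with hΓ
  set Γ₀ := (bisetG0 α).subgroupOf Γ with hΓ₀
  set Λ := bisetH1 hcomm α with hΛ
  set Λ₀ := (bisetH0 α).subgroupOf Λ with hΛ₀
  set ρ₁ : Representation k Γ M := ρ.comp Γ.subtype with hρ₁
  set σ₁ : Representation k Λ N := σ.comp Λ.subtype with hσ₁
  -- (2a) injectivity of φ on U
  have hinj : ∀ u ∈ U, φ u = 0 → u = 0 := by
    intro u hu hphiu
    set W : Submodule k M := U ⊓ LinearMap.ker φ with hWdef
    have hWU : W ≤ U := inf_le_left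
    have hWinv : ∀ g : Γ, W.map (ρ (g : G)) ≤ W := by
      rintro g m ⟨a, ⟨haU, hak⟩, rfl⟩
      obtain ⟨h, hgh⟩ := g.2
      refine ⟨hUinv g ⟨a, haU, rfl⟩, ?_⟩
      have h2 : φ (ρ (g : G) a) = σ h (φ a) := DFunLike.congr_fun (hcompat (g : G) h hgh) a
      show ρ (g : G) a ∈ LinearMap.ker φ
      rw [LinearMap.mem_ker, h2, LinearMap.mem_ker.mp hak, map_zero]
    rcases hUsimple W hWU hWinv with h | h
    · have : u ∈ W := ⟨hu, hphiu⟩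
      rw [h] at this; exact this
    · exfalso
      apply hφU
      rw [Submodule.eq_bot_iff]
      rintro n ⟨a, haU, rfl⟩
      have : a ∈ W := h.symm ▸ haU
      exact this.2
  -- (2b) compatibility
  have hcompat' : ∀ (g : G) (h : H), op g • α = h • α → ∀ u ∈ U, φ (ρ g u) = σ h (φ u) := by
    intro g h hgh u _
    have := DFunLike.congr_fun (hcompat g h hgh) u
    simpa using this
  -- G₀ acts trivially on U
  have htrivG : ∀ g ∈ Γ₀, ∀ u ∈ U, ρ₁ g u = u := by
    intro g hg u hu
    have hg0 : op (g : G) • α = α := hg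
    have h1 : op (g : G) • α = (1 : H) • α := by rw [one_smul]; exact hg0
    have h2 : φ (ρ (g : G) u) = σ 1 (φ u) := hcompat' _ _ h1 u hu
    rw [map_one, Module.End.one_apply] at h2
    have h3 : ρ (g : G) u - u ∈ U := by
      refine U.sub_mem ?_ hu
      exact hUinv g ⟨u, hu, rfl⟩
    have h4 : φ (ρ (g : G) u - u) = 0 := by rw [map_sub, h2, sub_self]
    have := hinj _ h3 h4
    have h5 : ρ (g : G) u = u := by rwa [sub_eq_zero] at this
    exact h5
  -- apply the aux lemma for U
  obtain ⟨ιM, hιMeq, hιMinj⟩ := auxPerm ρ₁ Γ₀ U hUinv htrivG hUsimple hUne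
  set ι : U →ₗ[k] ((Γ ⧸ Γ₀) →₀ k) := ιM ∘ₗ U.subtype with hιdef
  have hιker : LinearMap.ker ι = ⊥ := by
    rw [LinearMap.ker_eq_bot']
    intro u hu
    have : ιM (u : M) = 0 := hu
    have := hιMinj _ u.2 this
    exact Subtype.ext this
  obtain ⟨pr, hpr⟩ := LinearMap.exists_leftInverse_of_injective ι hιker
  -- part 3 setup
  set V := U.map φ with hVdef
  have hinvV : ∀ h : Λ, ∀ v ∈ V, σ (h : H) v ∈ V := by
    rintro h v ⟨u, hu, rfl⟩
    obtain ⟨g, hg⟩ := h.2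
    have hgh : op g • α = (h : H) • α := hg.symm
    have hgΓ : g ∈ Γ := ⟨h, hgh⟩
    refine ⟨ρ g u, hUinv ⟨g, hgΓ⟩ ⟨u, hu, rfl⟩, ?_⟩
    exact (hcompat' g h hgh u hu)
  have hVsimple : ∀ W ≤ V, (∀ h : Λ, W.map (σ (h : H)) ≤ W) → W = ⊥ ∨ W = V := by
    intro W hWV hWinv
    set W' : Submodule k M := U ⊓ W.comap φ with hW'def
    have hW'U : W' ≤ U := inf_le_left
    have hW'inv : ∀ g : Γ, W'.map (ρ (g : G)) ≤ W' := by
      rintro g m ⟨a, ⟨haU, haW⟩, rfl⟩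
      obtain ⟨h, hgh⟩ := g.2
      have hhΛ : h ∈ Λ := ⟨g, hgh.symm⟩
      refine ⟨hUinv g ⟨a, haU, rfl⟩, ?_⟩
      show ρ (g : G) a ∈ Submodule.comap φ W
      rw [Submodule.mem_comap, hcompat' _ _ hgh a haU]
      exact hWinv ⟨h, hhΛ⟩ ⟨φ a, Submodule.mem_comap.mp haW, rfl⟩
    rcases hUsimple W' hW'U hW'inv with h | h
    · left
      rw [Submodule.eq_bot_iff]
      intro w hw
      obtain ⟨u, hu, rfl⟩ := hWV hw
      have : u ∈ W' := ⟨hu, hw⟩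
      rw [h] at this
      rw [this, map_zero]
    · right
      refine le_antisymm hWV ?_
      rintro v ⟨u, hu, rfl⟩
      have : u ∈ W' := h.symm ▸ hu
      exact this.2
  -- H₀ acts trivially on V
  have htrivH : ∀ h ∈ Λ₀, ∀ v ∈ V, σ₁ h v = v := by
    rintro h hh v ⟨u, hu, rfl⟩
    have hh0 : (h : H) • α = α := hh
    have h1 : op (1 : G) • α = (h : H) • α := by
      rw [op_one, one_smul, hh0]
    have h2 := hcompat' _ _ h1 u hu
    rw [map_one, Module.End.one_apply] at h2
    exact h2.symm
  obtain ⟨ιN, hιNeq, hιNinj⟩ := auxPerm σ₁ Λ₀ V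
    (fun h => by rintro n ⟨v, hv, rfl⟩; exact hinvV h v hv) htrivH hVsimple hφU
  set ι' : V →ₗ[k] ((Λ ⧸ Λ₀) →₀ k) := ιN ∘ₗ V.subtype with hι'def
  have hι'ker : LinearMap.ker ι' = ⊥ := by
    rw [LinearMap.ker_eq_bot']
    intro v hv
    have : ιN (v : N) = 0 := hv
    exact Subtype.ext (hιNinj _ v.2 this)
  obtain ⟨pr', hpr'⟩ := LinearMap.exists_leftInverse_of_injective ι' hι'ker
  refine ⟨⟨ι, pr, ?_, hpr⟩, ⟨hinj, hcompat'⟩, hinvV, hVsimple, ι', pr', ?_, hpr'⟩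
  · intro g u
    exact hιMeq g (u : M) u.2
  · intro h v
    exact hιNeq h (v : N) v.2
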